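/- Under the stated operator setting, let 1 ≤ k ≤ p (with the convention μ_{k+1} = μ_{r+1} if k = r). Then for every φ ∈ Φ with ⟨φ, q_i⟩ = 0 for all 1 ≤ i ≤ k − 1, one has ⟨φ, T φ⟩ ≤ (μ_k · ⟨η_k, q_k⟩² + μ_{k+1}) · ‖φ‖². -/

import Mathlib

open scoped RealInnerProductSpace ENNReal
open Submodule Filter

noncomputable section

variable {H : Type*} [NormedAddCommGroup H] [InnerProductSpace ℝ H] [CompleteSpace H]

/-- Orthogonal projection onto `U`, as an operator `H → H` (defined to be `0` in the
degenerate case where `U` admits no orthogonal projection). -/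
noncomputable def proj (U : Submodule ℝ H) : H →L[ℝ] H := by
  classical
  exact if h : HasOrthogonalProjection U then
    (haveI := h; U.subtypeL ∘L orthogonalProjection U)
  else 0

/-- Squared Hilbert–Schmidt norm of an operator, computed in a fixed Hilbert basis of `H`. -/
noncomputable def hsNormSq (A : H →L[ℝ] H) : ℝ≥0∞ :=
  ∑' i : (exists_hilbertBasis ℝ H).choose,
    (‖A ((exists_hilbertBasis ℝ H).choose_spec.choose i)‖₊ : ℝ≥0∞) ^ 2

/-- Hilbert–Schmidt (Frobenius) norm of an operator. -/
noncomputable def hsNorm (A : H →L[ℝ] H) : ℝ := Real.sqrt (hsNormSq A).toReal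

/-- Projection distance `d_F(U, W) = ‖P_{Wᗮ} P_U‖_F`. -/
noncomputable def dF (U W : Submodule ℝ H) : ℝ := hsNorm ((proj Wᗮ) ∘L (proj U))

/-- Gap distance `d₂(U, W) = ‖P_{Wᗮ} P_U‖₂`. -/
noncomputable def d2 (U W : Submodule ℝ H) : ℝ := ‖(proj Wᗮ) ∘L (proj U)‖


lemma proj_apply' (U : Submodule ℝ H) (h : HasOrthogonalProjection U) (x : H) :
    proj U x = (haveI := h; (orthogonalProjection U x : H)) := by
  unfold proj
  rw [dif_pos h]
  rfl

lemma proj_mem (U : Submodule ℝ H) (h : HasOrthogonalProjection U) (x : H) : proj U x ∈ U := by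
  rw [proj_apply' U h]; exact SetLike.coe_mem _

lemma proj_fix (U : Submodule ℝ H) (h : HasOrthogonalProjection U) {x : H} (hx : x ∈ U) :
    proj U x = x := by
  rw [proj_apply' U h]
  exact (haveI := h; U.starProjection_eq_self_iff.2 hx)

lemma proj_adj (U : Submodule ℝ H) (h : HasOrthogonalProjection U) (x y : H) :
    ⟪proj U x, y⟫ = ⟪x, proj U y⟫ := by
  rw [proj_apply' U h, proj_apply' U h]
  exact (haveI := h; U.inner_starProjection_left_eq_right x y)

lemma mem_orthogonal_span_of {S : Set H} {w : H} (h : ∀ u ∈ S, ⟪u, w⟫ = 0) :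
    w ∈ (span ℝ S)ᗮ := by
  rw [Submodule.mem_orthogonal]
  intro u hu
  induction hu using Submodule.span_induction with
  | mem x hx => exact h x hx
  | zero => simp
  | add x y _ _ hx hy => rw [inner_add_left, hx, hy, add_zero]
  | smul c x _ hx => rw [real_inner_smul_left, hx, mul_zero]

set_option maxHeartbeats 1000000 in
/-- For `φ ∈ Φ` orthogonal to `q₁, …, q_{k−1}`,
`⟨φ, T φ⟩ ≤ (μ_k ⟨η_k, q_k⟩² + μ_{k+1}) ‖φ‖²`. -/
theorem stmt11 {H : Type*} [NormedAddCommGroup H] [InnerProductSpace ℝ H] [CompleteSpace H]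
    (T : H →L[ℝ] H)
    (hTsa : ∀ x y : H, ⟪T x, y⟫ = ⟪x, T y⟫)
    (hTpos : ∀ u : H, 0 ≤ ⟪u, T u⟫)
    (r : ℕ) (hr : 1 ≤ r) (η : ℕ → H) (μ : ℕ → ℝ)
    (hη : ∀ i ∈ Set.Icc 1 r, ∀ j ∈ Set.Icc 1 r, ⟪η i, η j⟫ = if i = j then (1 : ℝ) else 0)
    (hTeig : ∀ i ∈ Set.Icc 1 r, T (η i) = μ i • η i)
    (hμmono : ∀ i ∈ Set.Icc 1 (r + 1), ∀ j ∈ Set.Icc 1 (r + 1), i ≤ j → μ j ≤ μ i)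
    (hμr : 0 < μ r) (hμr1 : 0 ≤ μ (r + 1))
    (hTinv : ∀ w ∈ (span ℝ (η '' Set.Icc 1 r))ᗮ, T w ∈ (span ℝ (η '' Set.Icc 1 r))ᗮ)
    (hTres : ∀ w ∈ (span ℝ (η '' Set.Icc 1 r))ᗮ, ⟪w, T w⟫ ≤ μ (r + 1) * ‖w‖ ^ 2)
    (n : ℕ) (Φ : Submodule ℝ H) (hΦfd : FiniteDimensional ℝ Φ) (hΦn : Module.finrank ℝ Φ = n)
    (hlin : LinearIndependent ℝ (fun i : Set.Icc 1 (min n r) => proj Φ (η i.1)))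
    (q : ℕ → H)
    (hq : ∀ i ∈ Set.Icc 1 (min n r),
      q i = ‖proj Φ (η i) - ∑ l ∈ Finset.Ico 1 i, ⟪q l, η i⟫ • q l‖⁻¹ •
            (proj Φ (η i) - ∑ l ∈ Finset.Ico 1 i, ⟪q l, η i⟫ • q l))
    (k : ℕ) (hk1 : 1 ≤ k) (hkp : k ≤ min n r) :
    ∀ φ ∈ Φ, (∀ i ∈ Set.Icc 1 (k - 1), ⟪φ, q i⟫ = 0) →
      ⟪φ, T φ⟫ ≤ (μ k * ⟪η k, q k⟫ ^ 2 + μ (k + 1)) * ‖φ‖ ^ 2 := by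
  intro φ hφ hφq
  haveI := hΦfd
  have hproj : HasOrthogonalProjection Φ := inferInstance
  have hkr : k ≤ r := le_trans hkp (min_le_right n r)
  set t : ℕ → H := fun i => proj Φ (η i) - ∑ l ∈ Finset.Ico 1 i, ⟪q l, η i⟫ • q l with ht
  have htd : ∀ i, t i = proj Φ (η i) - ∑ l ∈ Finset.Ico 1 i, ⟪q l, η i⟫ • q l := fun i => rfl
  have hq' : ∀ i, 1 ≤ i → i ≤ min n r → q i = ‖t i‖⁻¹ • t i := by
    intro i h1 h2
    rw [htd]
    exact hq i (Set.mem_Icc.mpr ⟨h1, h2⟩)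
  -- Gram–Schmidt properties, by strong induction
  have GS : ∀ i, 1 ≤ i → i ≤ min n r → (q i ∈ Φ ∧ t i ≠ 0 ∧ ‖q i‖ = 1 ∧
      (∀ l, 1 ≤ l → l < i → ⟪q l, q i⟫ = 0) ∧
      q i ∈ span ℝ ((fun l => proj Φ (η l)) '' Set.Icc 1 i)) := by
    intro i
    induction i using Nat.strong_induction_on with
    | _ i IH =>
      intro hi1 hip
      have hsum_mem : (∑ l ∈ Finset.Ico 1 i, ⟪q l, η i⟫ • q l) ∈ Φ := by
        refine Submodule.sum_mem _ fun l hl => ?_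
        rw [Finset.mem_Ico] at hl
        exact Submodule.smul_mem _ _ ((IH l hl.2 hl.1 (hl.2.le.trans hip)).1)
      have htmem : t i ∈ Φ := by
        rw [htd]
        exact Submodule.sub_mem _ (proj_mem Φ hproj (η i)) hsum_mem
      have htspan : t i ∈ span ℝ ((fun l => proj Φ (η l)) '' Set.Icc 1 i) := by
        rw [htd]
        refine Submodule.sub_mem _ ?_ ?_
        · exact Submodule.subset_span ⟨i, Set.mem_Icc.mpr ⟨hi1, le_refl i⟩, rfl⟩
        · refine Submodule.sum_mem _ fun l hl => ?_
          rw [Finset.mem_Ico] at hl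
          refine Submodule.smul_mem _ _ ?_
          exact span_mono (Set.image_mono (Set.Icc_subset_Icc_right hl.2.le))
            ((IH l hl.2 hl.1 (hl.2.le.trans hip)).2.2.2.2)
      have htne : t i ≠ 0 := by
        intro h0
        have hvi : proj Φ (η i) ∈
            span ℝ ((fun j : Set.Icc 1 (min n r) => proj Φ (η j.1)) ''
              {j : Set.Icc 1 (min n r) | j.1 < i}) := by
          have hvi' : proj Φ (η i) = ∑ l ∈ Finset.Ico 1 i, ⟪q l, η i⟫ • q l := by
            have h0' := htd i ▸ h0
            exact sub_eq_zero.mp h0'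
          rw [hvi']
          refine Submodule.sum_mem _ fun l hl => ?_
          rw [Finset.mem_Ico] at hl
          refine Submodule.smul_mem _ _ ?_
          refine span_mono ?_ ((IH l hl.2 hl.1 (hl.2.le.trans hip)).2.2.2.2)
          rintro x ⟨m, hm, rfl⟩
          rw [Set.mem_Icc] at hm
          exact ⟨⟨m, Set.mem_Icc.mpr ⟨hm.1, le_trans (le_trans hm.2 hl.2.le) hip⟩⟩,
            lt_of_le_of_lt hm.2 hl.2, rfl⟩
        exact hlin.notMem_span_image
          (x := ⟨i, Set.mem_Icc.mpr ⟨hi1, hip⟩⟩)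
          (s := {j : Set.Icc 1 (min n r) | j.1 < i}) (by simp) hvi
      have hnq : ‖q i‖ = 1 := by
        rw [hq' i hi1 hip, norm_smul, norm_inv, norm_norm,
          inv_mul_cancel₀ (norm_ne_zero_iff.2 htne)]
      refine ⟨by rw [hq' i hi1 hip]; exact Submodule.smul_mem _ _ htmem, htne, hnq, ?_, by
        rw [hq' i hi1 hip]; exact Submodule.smul_mem _ _ htspan⟩
      intro l hl1 hli
      have hlp : l ≤ min n r := hli.le.trans hip
      obtain ⟨hqlΦ, _, hnl, horthl, _⟩ := IH l hli hl1 hlp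
      have h1 : ⟪q l, proj Φ (η i)⟫ = ⟪q l, η i⟫ := by
        rw [← proj_adj Φ hproj, proj_fix Φ hproj hqlΦ]
      have h2 : ⟪q l, ∑ m ∈ Finset.Ico 1 i, ⟪q m, η i⟫ • q m⟫ = ⟪q l, η i⟫ := by
        rw [inner_sum]
        rw [Finset.sum_eq_single_of_mem l (Finset.mem_Ico.mpr ⟨hl1, hli⟩)]
        · rw [real_inner_smul_right, real_inner_self_eq_norm_sq, hnl]; ring
        · intro m hm hml
          rw [Finset.mem_Ico] at hm
          rw [real_inner_smul_right]
          rcases lt_or_gt_of_ne hml with h | h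
          · rw [real_inner_comm (q m) (q l), horthl m hm.1 h, mul_zero]
          · obtain ⟨_, _, _, horthm, _⟩ := IH m hm.2 hm.1 (hm.2.le.trans hip)
            rw [horthm l hl1 h, mul_zero]
      rw [hq' i hi1 hip, real_inner_smul_right, htd, inner_sub_right, h1, h2, sub_self, mul_zero]
  -- recovering the projection from the Gram–Schmidt vectors
  have hPη : ∀ i, 1 ≤ i → i ≤ min n r →
      proj Φ (η i) = ‖t i‖ • q i + ∑ l ∈ Finset.Ico 1 i, ⟪q l, η i⟫ • q l := by
    intro i h1 h2
    have htne := (GS i h1 h2).2.1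
    rw [hq' i h1 h2, smul_smul, mul_inv_cancel₀ (norm_ne_zero_iff.2 htne), one_smul, htd]
    abel
  -- inner products of φ with the η's
  have hφinner : ∀ i, 1 ≤ i → i ≤ min n r →
      ⟪η i, φ⟫ = ‖t i‖ * ⟪φ, q i⟫ + ∑ l ∈ Finset.Ico 1 i, ⟪q l, η i⟫ * ⟪φ, q l⟫ := by
    intro i h1 h2
    have hstep : ⟪η i, φ⟫ = ⟪φ, proj Φ (η i)⟫ := by
      rw [real_inner_comm, ← proj_adj Φ hproj, proj_fix Φ hproj hφ]
    rw [hstep, hPη i h1 h2, inner_add_right, real_inner_smul_right, inner_sum]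
    congr 1
    exact Finset.sum_congr rfl fun l _ => real_inner_smul_right _ _ _
  have hc0 : ∀ i, 1 ≤ i → i < k → ⟪η i, φ⟫ = 0 := by
    intro i h1 h2
    rw [hφinner i h1 (le_trans h2.le hkp), hφq i (Set.mem_Icc.mpr ⟨h1, by omega⟩), mul_zero,
      zero_add]
    refine Finset.sum_eq_zero fun l hl => ?_
    rw [Finset.mem_Ico] at hl
    rw [hφq l (Set.mem_Icc.mpr ⟨hl.1, by omega⟩), mul_zero]
  have hck : ⟪η k, φ⟫ = ‖t k‖ * ⟪φ, q k⟫ := by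
    rw [hφinner k hk1 hkp]
    have : (∑ l ∈ Finset.Ico 1 k, ⟪q l, η k⟫ * ⟪φ, q l⟫) = 0 := by
      refine Finset.sum_eq_zero fun l hl => ?_
      rw [Finset.mem_Ico] at hl
      rw [hφq l (Set.mem_Icc.mpr ⟨hl.1, by omega⟩), mul_zero]
    rw [this, add_zero]
  obtain ⟨hqkΦ, htkne, hnqk, horthk, _⟩ := GS k hk1 hkp
  have hek : ⟪η k, q k⟫ = ‖t k‖ := by
    have hstep : ⟪η k, q k⟫ = ⟪q k, proj Φ (η k)⟫ := by
      rw [real_inner_comm, ← proj_adj Φ hproj, proj_fix Φ hproj hqkΦ]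
    rw [hstep, hPη k hk1 hkp, inner_add_right, real_inner_smul_right,
      real_inner_self_eq_norm_sq, hnqk]
    have : (⟪q k, ∑ l ∈ Finset.Ico 1 k, ⟪q l, η k⟫ • q l⟫ : ℝ) = 0 := by
      rw [inner_sum]
      refine Finset.sum_eq_zero fun l hl => ?_
      rw [Finset.mem_Ico] at hl
      rw [real_inner_smul_right, real_inner_comm (q l) (q k), horthk l hl.1 hl.2, mul_zero]
    rw [this, add_zero]
    ring
  -- spectral decomposition
  set s : H := ∑ i ∈ Finset.Icc 1 r, ⟪η i, φ⟫ • η i with hs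
  have hbil : ∀ a b : ℕ → ℝ,
      (⟪∑ i ∈ Finset.Icc 1 r, a i • η i, ∑ i ∈ Finset.Icc 1 r, b i • η i⟫ : ℝ)
        = ∑ i ∈ Finset.Icc 1 r, a i * b i := by
    intro a b
    rw [sum_inner]
    refine Finset.sum_congr rfl fun i hi => ?_
    rw [Finset.mem_Icc] at hi
    rw [real_inner_smul_left, inner_sum]
    have h2 : ∀ j ∈ Finset.Icc 1 r, (⟪η i, b j • η j⟫ : ℝ) = if i = j then b i else 0 := by
      intro j hj
      rw [Finset.mem_Icc] at hj
      rw [real_inner_smul_right, hη i (Set.mem_Icc.mpr hi) j (Set.mem_Icc.mpr hj)]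
      split_ifs with h
      · subst h; ring
      · ring
    rw [Finset.sum_congr rfl h2, Finset.sum_ite_eq (Finset.Icc 1 r) i fun _ => b i,
      if_pos (Finset.mem_Icc.mpr hi)]
  have hsE : s ∈ span ℝ (η '' Set.Icc 1 r) := by
    refine Submodule.sum_mem _ fun i hi => ?_
    rw [Finset.mem_Icc] at hi
    exact Submodule.smul_mem _ _ (Submodule.subset_span ⟨i, Set.mem_Icc.mpr hi, rfl⟩)
  have hwperp : φ - s ∈ (span ℝ (η '' Set.Icc 1 r))ᗮ := by
    apply mem_orthogonal_span_of
    rintro u ⟨j, hj, rfl⟩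
    rw [Set.mem_Icc] at hj
    rw [inner_sub_right, hs, inner_sum]
    have h2 : ∀ i ∈ Finset.Icc 1 r, (⟪η j, ⟪η i, φ⟫ • η i⟫ : ℝ)
        = if j = i then ⟪η j, φ⟫ else 0 := by
      intro i hi
      rw [Finset.mem_Icc] at hi
      rw [real_inner_smul_right, hη j (Set.mem_Icc.mpr hj) i (Set.mem_Icc.mpr hi)]
      split_ifs with h
      · subst h; ring
      · ring
    rw [Finset.sum_congr rfl h2, Finset.sum_ite_eq (Finset.Icc 1 r) j fun _ => ⟪η j, φ⟫,
      if_pos (Finset.mem_Icc.mpr hj), sub_self]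
  have hTs : T s = ∑ i ∈ Finset.Icc 1 r, (⟪η i, φ⟫ * μ i) • η i := by
    rw [hs, map_sum]
    refine Finset.sum_congr rfl fun i hi => ?_
    rw [Finset.mem_Icc] at hi
    rw [map_smul, hTeig i (Set.mem_Icc.mpr hi), smul_smul]
  have hTsE : T s ∈ span ℝ (η '' Set.Icc 1 r) := by
    rw [hTs]
    refine Submodule.sum_mem _ fun i hi => ?_
    rw [Finset.mem_Icc] at hi
    exact Submodule.smul_mem _ _ (Submodule.subset_span ⟨i, Set.mem_Icc.mpr hi, rfl⟩)
  have hsTs : (⟪s, T s⟫ : ℝ) = ∑ i ∈ Finset.Icc 1 r, μ i * ⟪η i, φ⟫ ^ 2 := by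
    rw [hs, hTs, hbil]
    exact Finset.sum_congr rfl fun i _ => by ring
  have hss : (⟪s, s⟫ : ℝ) = ∑ i ∈ Finset.Icc 1 r, ⟪η i, φ⟫ ^ 2 := by
    rw [hs, hbil]
    exact Finset.sum_congr rfl fun i _ => by ring
  have hTw : T (φ - s) ∈ (span ℝ (η '' Set.Icc 1 r))ᗮ := hTinv _ hwperp
  have e1 : (⟪s, T (φ - s)⟫ : ℝ) = 0 := inner_right_of_mem_orthogonal hsE hTw
  have e2 : (⟪φ - s, T s⟫ : ℝ) = 0 := inner_left_of_mem_orthogonal hTsE hwperp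
  have e3 : (⟪s, φ - s⟫ : ℝ) = 0 := inner_right_of_mem_orthogonal hsE hwperp
  have hexp : (⟪φ, T φ⟫ : ℝ)
      = ⟪s, T s⟫ + ⟪s, T (φ - s)⟫ + ⟪φ - s, T s⟫ + ⟪φ - s, T (φ - s)⟫ := by
    simp only [map_sub, inner_sub_left, inner_sub_right]
    ring
  have hnormsplit : ‖φ‖ ^ 2 = (∑ i ∈ Finset.Icc 1 r, ⟪η i, φ⟫ ^ 2) + ‖φ - s‖ ^ 2 := by
    have hφφ : (⟪φ, φ⟫ : ℝ) = ⟪s, s⟫ + 2 * ⟪s, φ - s⟫ + ⟪φ - s, φ - s⟫ := by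
      simp only [inner_sub_left, inner_sub_right]
      rw [real_inner_comm s φ]
      ring
    rw [← real_inner_self_eq_norm_sq φ, ← real_inner_self_eq_norm_sq (φ - s), hφφ, e3, hss]
    ring
  -- bounding the sum
  have hkmem : k ∈ Finset.Icc 1 r := Finset.mem_Icc.mpr ⟨hk1, hkr⟩
  have hsum1 : (∑ i ∈ Finset.Icc 1 r, μ i * ⟪η i, φ⟫ ^ 2)
      = μ k * ⟪η k, φ⟫ ^ 2 + ∑ i ∈ (Finset.Icc 1 r).erase k, μ i * ⟪η i, φ⟫ ^ 2 :=
    (Finset.add_sum_erase _ _ hkmem).symm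
  have hsum2 : (∑ i ∈ Finset.Icc 1 r, ⟪η i, φ⟫ ^ 2)
      = ⟪η k, φ⟫ ^ 2 + ∑ i ∈ (Finset.Icc 1 r).erase k, ⟪η i, φ⟫ ^ 2 :=
    (Finset.add_sum_erase _ _ hkmem).symm
  have hterm : ∀ i ∈ (Finset.Icc 1 r).erase k,
      μ i * ⟪η i, φ⟫ ^ 2 ≤ μ (k + 1) * ⟪η i, φ⟫ ^ 2 := by
    intro i hi
    obtain ⟨hik, hi'⟩ := Finset.mem_erase.mp hi
    rw [Finset.mem_Icc] at hi'
    rcases lt_or_gt_of_ne hik with h | h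
    · rw [hc0 i hi'.1 h]
      simp
    · have hμ : μ i ≤ μ (k + 1) :=
        hμmono (k + 1) (Set.mem_Icc.mpr ⟨by omega, by omega⟩) i
          (Set.mem_Icc.mpr ⟨by omega, by omega⟩) h
      exact mul_le_mul_of_nonneg_right hμ (sq_nonneg _)
  have hsum_le : (∑ i ∈ (Finset.Icc 1 r).erase k, μ i * ⟪η i, φ⟫ ^ 2)
      ≤ μ (k + 1) * ∑ i ∈ (Finset.Icc 1 r).erase k, ⟪η i, φ⟫ ^ 2 := by
    rw [Finset.mul_sum]
    exact Finset.sum_le_sum hterm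
  have hμk1_nonneg : 0 ≤ μ (k + 1) :=
    le_trans hμr1 (hμmono (k + 1) (Set.mem_Icc.mpr ⟨by omega, by omega⟩) (r + 1)
      (Set.mem_Icc.mpr ⟨by omega, le_refl _⟩) (by omega))
  have hμk_nonneg : 0 ≤ μ k :=
    le_trans hμr.le (hμmono k (Set.mem_Icc.mpr ⟨by omega, by omega⟩) r
      (Set.mem_Icc.mpr ⟨by omega, by omega⟩) hkr)
  have hμrk : μ (r + 1) ≤ μ (k + 1) :=
    hμmono (k + 1) (Set.mem_Icc.mpr ⟨by omega, by omega⟩) (r + 1)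
      (Set.mem_Icc.mpr ⟨by omega, le_refl _⟩) (by omega)
  have hwT : (⟪φ - s, T (φ - s)⟫ : ℝ) ≤ μ (k + 1) * ‖φ - s‖ ^ 2 :=
    le_trans (hTres _ hwperp) (mul_le_mul_of_nonneg_right hμrk (sq_nonneg _))
  have hCS : ⟪φ, q k⟫ ^ 2 ≤ ‖φ‖ ^ 2 := by
    have h1 := abs_real_inner_le_norm φ (q k)
    rw [hnqk, mul_one] at h1
    nlinarith [abs_nonneg (⟪φ, q k⟫ : ℝ), sq_abs (⟪φ, q k⟫ : ℝ), norm_nonneg φ]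
  have hck2 : ⟪η k, φ⟫ ^ 2 ≤ ⟪η k, q k⟫ ^ 2 * ‖φ‖ ^ 2 := by
    rw [hck, ← hek]
    nlinarith [sq_nonneg (⟪η k, q k⟫ : ℝ)]
  -- final assembly
  have key1 : (⟪φ, T φ⟫ : ℝ) = (∑ i ∈ Finset.Icc 1 r, μ i * ⟪η i, φ⟫ ^ 2)
      + ⟪φ - s, T (φ - s)⟫ := by
    rw [hexp, e1, e2, hsTs]
    ring
  nlinarith [key1, hsum1, hsum2, hsum_le, hwT, hnormsplit, hck2,
    mul_le_mul_of_nonneg_left hck2 hμk_nonneg,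
    mul_nonneg hμk1_nonneg (sq_nonneg (⟪η k, φ⟫ : ℝ)),
    sq_nonneg (⟪η k, φ⟫ : ℝ)]

end
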